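/- Suppose f is a real-valued function defined on an interval [a,b] (with a < b) and c is a point in [a, (a+b)/2] such that: (i) f(c−x) + f(c+x) = 2 f(c) whenever both c−x and c+x lie in [a,b]; and (ii) the restriction of f to [c,b] is concave. Then for every Borel probability measure μ on [a,b] with respect to which f is integrable and whose barycenter b_μ = ∫_a^b x dμ(x) lies in the interval [2c−a, b], one has f(b_μ) ≥ ∫_a^b f(x) dμ(x). -/

import Mathlib

open MeasureTheory

/-- Theorem 1: Jensen-type inequality for a function that is point-symmetric about
`(c, f c)` and concave on `[c, b]`, for probability measures whose barycenter lies
in `[2c - a, b]`. -/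
theorem jensen_mixed_concave
    (a b c : ℝ) (hab : a < b) (hc : c ∈ Set.Icc a ((a + b) / 2))
    (f : ℝ → ℝ)
    (hsym : ∀ x : ℝ, c - x ∈ Set.Icc a b → c + x ∈ Set.Icc a b →
      f (c - x) + f (c + x) = 2 * f c)
    (hconv : ConcaveOn ℝ (Set.Icc c b) f)
    (μ : Measure ℝ) [IsProbabilityMeasure μ] (hμ : μ (Set.Icc a b) = 1)
    (hf_int : Integrable f μ) (hid_int : Integrable (fun x => x) μ)
    (hbary : (∫ x, x ∂μ) ∈ Set.Icc (2 * c - a) b) :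
    (∫ x, f x ∂μ) ≤ f (∫ x, x ∂μ) := by
  set m := ∫ x, x ∂μ with hm
  have haeIcc : ∀ᵐ x ∂μ, x ∈ Set.Icc a b := by
    have h0 : μ (Set.Icc a b)ᶜ = 0 := (prob_compl_eq_zero_iff measurableSet_Icc).mpr hμ
    rw [ae_iff]; exact h0
  have h2cab : 2 * c - a ≤ b := by have := hc.2; linarith
  have hdirac : ∀ p : ℝ, (∀ᵐ x ∂μ, x = p) → (∫ x, f x ∂μ) = f p := by
    intro p hp
    have heq : (fun x => f x) =ᵐ[μ] fun _ => f p := hp.mono fun x hx => by rw [hx]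
    rw [integral_congr_ae heq, integral_const, probReal_univ]; simp
  rcases eq_or_lt_of_le hbary.2 with hmb | hmb
  · -- barycenter equals b : measure is a.e. Dirac at b
    have hnn : 0 ≤ᵐ[μ] fun x => b - x := haeIcc.mono fun x hx => by
      simp [sub_nonneg, hx.2]
    have hint : Integrable (fun x => b - x) μ := (integrable_const b).sub hid_int
    have hz : ∫ x, (b - x) ∂μ = 0 := by
      rw [integral_sub (integrable_const b) hid_int, integral_const, ← hm, probReal_univ]
      simp [← hmb]
    have h0 := (integral_eq_zero_iff_of_nonneg_ae hnn hint).mp hz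
    have hp : ∀ᵐ x ∂μ, x = b := h0.mono fun x hx => by
      have : b - x = 0 := hx
      linarith
    rw [hdirac b hp, hmb]
  · -- m < b
    have ham : a ≤ m := le_trans (by linarith [hc.1]) hbary.1
    rcases eq_or_lt_of_le ham with ham' | ham'
    · -- barycenter equals a : measure is a.e. Dirac at a
      have hnn : 0 ≤ᵐ[μ] fun x => x - a := haeIcc.mono fun x hx => by
        simp [sub_nonneg, hx.1]
      have hint : Integrable (fun x => x - a) μ := hid_int.sub (integrable_const a)
      have hz : ∫ x, (x - a) ∂μ = 0 := by
        rw [integral_sub hid_int (integrable_const a), integral_const, ← hm, probReal_univ]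
        simp [← ham']
      have h0 := (integral_eq_zero_iff_of_nonneg_ae hnn hint).mp hz
      have hp : ∀ᵐ x ∂μ, x = a := h0.mono fun x hx => by
        have : x - a = 0 := hx
        linarith
      rw [hdirac a hp, ← ham']
    · -- main case : a < m < b, so c < m
      have hcm : c < m := by
        rcases eq_or_lt_of_le hc.1 with h | h
        · rw [← h]; exact ham'
        · linarith [hbary.1]
      have hd : (0:ℝ) < m - c := by linarith
      have hmem : m ∈ Set.Icc c b := ⟨hcm.le, hmb.le⟩
      have hbmem : b ∈ Set.Icc c b := ⟨by linarith, le_refl b⟩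
      set S : Set ℝ := (fun x => (f m - f x) / (m - x)) '' Set.Ico c m with hS
      have hSne : S.Nonempty := ⟨_, ⟨c, ⟨le_refl c, hcm⟩, rfl⟩⟩
      have hlb : ∀ s ∈ S, (f b - f m) / (b - m) ≤ s := by
        rintro s ⟨x, ⟨hx1, hx2⟩, rfl⟩
        exact hconv.slope_anti_adjacent ⟨hx1, by linarith⟩ hbmem hx2 hmb
      have hbdd : BddBelow S := ⟨_, hlb⟩
      set k := sInf S with hk
      have hk1 : ∀ x, c ≤ x → x < m → k * (m - x) ≤ f m - f x := by
        intro x h1 h2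
        have hle : k ≤ (f m - f x) / (m - x) := csInf_le hbdd ⟨x, ⟨h1, h2⟩, rfl⟩
        exact (le_div_iff₀ (by linarith)).mp hle
      have hk2 : ∀ x, m < x → x ≤ b → f x - f m ≤ k * (x - m) := by
        intro x h1 h2
        have hsl : (f x - f m) / (x - m) ≤ k := by
          apply le_csInf hSne
          rintro s ⟨y, ⟨hy1, hy2⟩, rfl⟩
          exact hconv.slope_anti_adjacent ⟨hy1, by linarith⟩ ⟨by linarith, h2⟩ hy2 h1
        exact (div_le_iff₀ (by linarith)).mp hsl
      have hBc : k * (m - c) ≤ f m - f c := hk1 c (le_refl c) hcm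
      -- pointwise bound  f x ≤ f m + k * (x - m)  on [a, b]
      have hL : ∀ x ∈ Set.Icc a b, f x ≤ f m + k * (x - m) := by
        intro x hx
        rcases le_or_gt c x with hcx | hcx
        · rcases lt_trichotomy x m with h | h | h
          · have := hk1 x hcx h; nlinarith
          · rw [h]; simp
          · have := hk2 x h hx.2; linarith
        · -- x < c : use symmetry
          set y := 2 * c - x with hy
          have hy1 : c - (c - x) = x := by ring
          have hy2 : c + (c - x) = y := by rw [hy]; ring
          have hyIcc : y ∈ Set.Icc a b := by
            constructor
            · have := hc.1; simp only [hy]; linarith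
            · have := hx.1; simp only [hy]; linarith
          have hsymx : f x + f y = 2 * f c := by
            have := hsym (c - x) (by rw [hy1]; exact hx) (by rw [hy2]; exact hyIcc)
            rwa [hy1, hy2] at this
          have hym : y ≤ m := by
            have := hbary.1; have := hx.1; simp only [hy]; linarith
          have hyc : c ≤ y := by simp only [hy]; linarith
          -- concavity of f between c and m, evaluated at y
          have hcfy : (m - y) * f c + (y - c) * f m ≤ (m - c) * f y := by
            have hcc := hconv.2 (show c ∈ Set.Icc c b from ⟨le_refl c, by linarith⟩) hmem
              (div_nonneg (by linarith) (by linarith) :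
                (0:ℝ) ≤ (m - y) / (m - c))
              (div_nonneg (by linarith) (by linarith) :
                (0:ℝ) ≤ (y - c) / (m - c))
              (by field_simp; ring)
            rw [smul_eq_mul, smul_eq_mul, smul_eq_mul, smul_eq_mul] at hcc
            have harg : (m - y) / (m - c) * c + (y - c) / (m - c) * m = y := by
              field_simp; ring
            rw [harg] at hcc
            have h2 := mul_le_mul_of_nonneg_left hcc hd.le
            have h3 : (m - c) * ((m - y) / (m - c) * f c + (y - c) / (m - c) * f m)
                = (m - y) * f c + (y - c) * f m := by field_simp
            rw [h3] at h2
            exact h2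
          have hfx : f x = 2 * f c - f y := by linarith
          rw [hfx, show x - m = (c - y) + (c - m) by simp only [hy]; ring]
          nlinarith [hcfy, hd,
            mul_nonneg (show (0:ℝ) ≤ (m - c) + (y - c) by linarith)
              (show (0:ℝ) ≤ f m - f c - k * (m - c) by linarith)]
      -- integrate the pointwise bound
      have hL_int : Integrable (fun x => f m + k * (x - m)) μ :=
        (integrable_const (f m)).add ((hid_int.sub (integrable_const m)).const_mul k)
      have hmono : (∫ x, f x ∂μ) ≤ ∫ x, (f m + k * (x - m)) ∂μ :=
        integral_mono_ae hf_int hL_int (haeIcc.mono fun x hx => hL x hx)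
      have hi2 : Integrable (fun x => k * (x - m)) μ := by
        have := (hid_int.sub (integrable_const m)).const_mul k
        simpa using this
      have h1 : ∫ x, (x - m) ∂μ = 0 := by
        rw [integral_sub hid_int (integrable_const m), integral_const, probReal_univ, ← hm]
        simp
      have hcalc : ∫ x, (f m + k * (x - m)) ∂μ = f m := by
        rw [integral_add (integrable_const (f m)) hi2, integral_const_mul, h1, mul_zero,
          integral_const, probReal_univ]
        simp
      linarith [hmono, hcalc.le, hcalc.ge]
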